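/- Consider the two-node SIS system: ⟨SI⟩' = −(τ+γ)⟨SI⟩ + γ⟨II⟩, ⟨IS⟩' = −(τ+γ)⟨IS⟩ + γ⟨II⟩, ⟨II⟩' = −2γ⟨II⟩ + τ⟨SI⟩ + τ⟨IS⟩, ⟨SS⟩' = γ⟨SI⟩ + γ⟨IS⟩, with τ, γ > 0 and all four functions nonnegative. Then A(t) = ⟨II⟩(t)⟨SS⟩(t) − ⟨SI⟩(t)⟨IS⟩(t) satisfies Ȧ = −2(τ+γ)A + b with b(t) = τ(⟨SI⟩⟨SS⟩ + ⟨IS⟩⟨SS⟩ + 2⟨II⟩⟨SS⟩) ≥ 0; hence A(0) ≥ 0 implies A(t) ≥ 0 for all t ≥ 0. -/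

import Mathlib

/-- Two-node SIS system: `A = ⟨II⟩⟨SS⟩ - ⟨SI⟩⟨IS⟩` satisfies
`Ȧ = -2(τ+γ)A + b` with `b = τ(⟨SI⟩⟨SS⟩ + ⟨IS⟩⟨SS⟩ + 2⟨II⟩⟨SS⟩) ≥ 0`;
hence `A(0) ≥ 0` implies `A(t) ≥ 0` for `t ≥ 0`. -/
theorem two_node_SIS_nonneg_correlation (τ γ : ℝ) (hτ : 0 < τ) (hγ : 0 < γ)
    (SI IS II SS : ℝ → ℝ)
    (hpos : ∀ t : ℝ, 0 ≤ t → 0 ≤ SI t ∧ 0 ≤ IS t ∧ 0 ≤ II t ∧ 0 ≤ SS t)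
    (hSI : ∀ t : ℝ, 0 ≤ t → HasDerivAt SI (-(τ + γ) * SI t + γ * II t) t)
    (hIS : ∀ t : ℝ, 0 ≤ t → HasDerivAt IS (-(τ + γ) * IS t + γ * II t) t)
    (hII : ∀ t : ℝ, 0 ≤ t → HasDerivAt II (-2 * γ * II t + τ * SI t + τ * IS t) t)
    (hSS : ∀ t : ℝ, 0 ≤ t → HasDerivAt SS (γ * SI t + γ * IS t) t) :
    (∀ t : ℝ, 0 ≤ t →
      HasDerivAt (fun s => II s * SS s - SI s * IS s)
        (-2 * (τ + γ) * (II t * SS t - SI t * IS t) +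
          τ * (SI t * SS t + IS t * SS t + 2 * II t * SS t)) t ∧
      0 ≤ τ * (SI t * SS t + IS t * SS t + 2 * II t * SS t)) ∧
    (0 ≤ II 0 * SS 0 - SI 0 * IS 0 →
      ∀ t : ℝ, 0 ≤ t → 0 ≤ II t * SS t - SI t * IS t) := by
  have hA : ∀ t : ℝ, 0 ≤ t →
      HasDerivAt (fun s => II s * SS s - SI s * IS s)
        (-2 * (τ + γ) * (II t * SS t - SI t * IS t) +
          τ * (SI t * SS t + IS t * SS t + 2 * II t * SS t)) t := by
    intro t ht
    have h := ((hII t ht).mul (hSS t ht)).sub ((hSI t ht).mul (hIS t ht))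
    refine h.congr_deriv ?_
    ring
  have hb : ∀ t : ℝ, 0 ≤ t →
      0 ≤ τ * (SI t * SS t + IS t * SS t + 2 * II t * SS t) := by
    intro t ht
    obtain ⟨h1, h2, h3, h4⟩ := hpos t ht
    positivity
  refine ⟨fun t ht => ⟨hA t ht, hb t ht⟩, ?_⟩
  intro h0 t ht
  set c : ℝ := 2 * (τ + γ) with hc
  set f : ℝ → ℝ := fun s => (II s * SS s - SI s * IS s) * Real.exp (c * s) with hf
  have hfderiv : ∀ s : ℝ, 0 ≤ s →
      HasDerivAt f
        (τ * (SI s * SS s + IS s * SS s + 2 * II s * SS s) * Real.exp (c * s)) s := by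
    intro s hs
    have he : HasDerivAt (fun u : ℝ => Real.exp (c * u)) (c * Real.exp (c * s)) s := by
      have := ((hasDerivAt_id s).const_mul c).exp
      simpa [mul_comm] using this
    have h := (hA s hs).mul he
    refine h.congr_deriv ?_
    ring
  have hmono : MonotoneOn f (Set.Ici (0 : ℝ)) := by
    apply monotoneOn_of_deriv_nonneg (convex_Ici 0)
    · intro s hs
      exact ((hfderiv s hs).continuousAt).continuousWithinAt
    · intro s hs
      rw [interior_Ici] at hs
      exact ((hfderiv s (le_of_lt hs)).differentiableAt).differentiableWithinAt
    · intro s hs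
      rw [interior_Ici] at hs
      rw [(hfderiv s (le_of_lt hs)).deriv]
      have := hb s (le_of_lt hs)
      positivity
  have h1 : f 0 ≤ f t := hmono Set.self_mem_Ici ht ht
  have hf0 : 0 ≤ f 0 := by
    simp only [hf, mul_zero, Real.exp_zero, mul_one]
    exact h0
  have hft : 0 ≤ f t := le_trans hf0 h1
  have hexp : 0 < Real.exp (c * t) := Real.exp_pos _
  exact (mul_nonneg_iff_of_pos_right hexp).mp hft
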